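/- For all n, r, s ≥ 0, G_{a,b}(n;r+s) = Σ_{i=0}^{n} C(n,i) · G_{a,b}(i;r) · ∏_{j=0}^{n−i−1}(a·j + (a+b)·s), where G_{a,b}(n;r) := Σ_{k=0}^{n} G_{a,b}(n,k;r). -/
import Mathlib


open Finset

/-- The generalized r-Lah numbers `G_{a,b}(n,k;r)`. -/
def genLah {R : Type*} [CommRing R] (a b : R) (r : ℕ) : ℕ → ℕ → R
  | 0, 0 => 1
  | 0, _ + 1 => 0
  | n + 1, 0 => (a * ((n : R) + (r : R)) + b * (r : R)) * genLah a b r n 0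
  | n + 1, k + 1 => genLah a b r n k +
      (a * (n : R) + b * ((k : R) + 1) + (a + b) * (r : R)) * genLah a b r n (k + 1)

/-- Auxiliary "shifted" r-Lah number: `genLah` at `k-1`, or `0` when `k = 0`. -/
def genLahD {R : Type*} [CommRing R] (a b : R) (r : ℕ) (n k : ℕ) : R :=
  if k = 0 then 0 else genLah a b r n (k - 1)

/-- Uniform recurrence for `genLah`. -/
lemma genLah_succ {R : Type*} [CommRing R] (a b : R) (r n k : ℕ) :
    genLah a b r (n + 1) k =
      genLahD a b r n k + (a * n + b * k + (a + b) * r) * genLah a b r n k := by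
  cases k with
  | zero =>
      show (a * ((n : R) + (r : R)) + b * (r : R)) * genLah a b r n 0 = _
      simp [genLahD]
      ring
  | succ k =>
      show genLah a b r n k +
          (a * (n : R) + b * ((k : R) + 1) + (a + b) * (r : R)) * genLah a b r n (k + 1) = _
      simp only [genLahD, Nat.succ_ne_zero, if_false, Nat.add_sub_cancel]
      push_cast
      ring

lemma genLah_zero_row {R : Type*} [CommRing R] (a b : R) (r k : ℕ) :
    genLah a b r 0 k = if k = 0 then 1 else 0 := by
  cases k <;> simp [genLah]

lemma genLah_eq_zero {R : Type*} [CommRing R] (a b : R) (r : ℕ) :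
    ∀ n k, n < k → genLah a b r n k = 0 := by
  intro n
  induction n with
  | zero =>
      intro k hk
      cases k with
      | zero => omega
      | succ k => simp [genLah]
  | succ n ih =>
      intro k hk
      cases k with
      | zero => omega
      | succ k =>
          show genLah a b r n k + _ * genLah a b r n (k + 1) = 0
          rw [ih k (by omega), ih (k + 1) (by omega)]
          ring

/-- The product `∏_{j<m} (a j + (a+b) s)`. -/
def Pprod {R : Type*} [CommRing R] (a b : R) (s : ℕ) (m : ℕ) : R :=
  ∏ j ∈ range m, (a * (j : R) + (a + b) * (s : R))

lemma Pprod_succ {R : Type*} [CommRing R] (a b : R) (s m : ℕ) :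
    Pprod a b s (m + 1) = Pprod a b s m * (a * (m : R) + (a + b) * (s : R)) :=
  prod_range_succ _ _

/-- The key refined identity at the level of individual `genLah` numbers. -/
lemma genLah_add_s {R : Type*} [CommRing R] (a b : R) (r s : ℕ) :
    ∀ n k, genLah a b (r + s) n k =
      ∑ i ∈ range (n + 1), (n.choose i : R) * genLah a b r i k * Pprod a b s (n - i) := by
  intro n
  induction n with
  | zero =>
      intro k
      simp [genLah_zero_row, Pprod]
  | succ n ih =>
      intro k
      rw [genLah_succ]
      have hD : genLahD a b (r + s) n k =
          ∑ i ∈ range (n + 1), (n.choose i : R) * genLahD a b r i k * Pprod a b s (n - i) := by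
        cases k with
        | zero => simp [genLahD]
        | succ k =>
            simp only [genLahD, Nat.succ_ne_zero, if_false, Nat.add_sub_cancel]
            exact ih k
      rw [hD, ih k]
      symm
      -- Now a pure sum identity.
      rw [Finset.sum_range_succ']
      have hsimp : ∀ i ∈ range (n + 1),
          (((n + 1).choose (i + 1) : ℕ) : R) * genLah a b r (i + 1) k *
              Pprod a b s (n + 1 - (i + 1)) =
          ((n.choose i : R) * genLahD a b r i k * Pprod a b s (n - i)
            + (n.choose i : R) * ((a * i + b * k + (a + b) * r) * genLah a b r i k)
                * Pprod a b s (n - i))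
            + (n.choose (i + 1) : R) * genLah a b r (i + 1) k * Pprod a b s (n - i) := by
        intro i hi
        rw [Nat.choose_succ_succ, Nat.succ_sub_succ, genLah_succ]
        push_cast
        ring
      rw [Finset.sum_congr rfl hsimp]
      rw [Finset.sum_add_distrib, Finset.sum_add_distrib]
      -- right-hand side: split the coefficient
      have hrhs : ∀ i ∈ range (n + 1),
          (a * (n : R) + b * (k : R) + (a + b) * ((r + s : ℕ) : R)) *
            ((n.choose i : R) * genLah a b r i k * Pprod a b s (n - i)) =
          (n.choose i : R) * ((a * i + b * k + (a + b) * r) * genLah a b r i k)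
              * Pprod a b s (n - i)
            + (n.choose i : R) * genLah a b r i k * Pprod a b s (n - i + 1) := by
        intro i hi
        rw [mem_range] at hi
        rw [Pprod_succ]
        have hcast : ((n - i : ℕ) : R) = (n : R) - (i : R) := by
          rw [Nat.cast_sub (by omega)]
        have : a * ((n - i : ℕ) : R) + (a + b) * (s : R)
            = a * (n : R) - a * (i : R) + (a + b) * (s : R) := by
          rw [hcast]; ring
        rw [this]
        push_cast
        ring
      rw [Finset.mul_sum, Finset.sum_congr rfl hrhs, Finset.sum_add_distrib]
      -- core combinatorial shift identity
      have core : ∑ i ∈ range (n + 1),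
            (n.choose (i + 1) : R) * genLah a b r (i + 1) k * Pprod a b s (n - i)
          + (((n + 1).choose 0 : ℕ) : R) * genLah a b r 0 k * Pprod a b s (n + 1 - 0)
          = ∑ i ∈ range (n + 1),
            (n.choose i : R) * genLah a b r i k * Pprod a b s (n - i + 1) := by
        rw [Finset.sum_range_succ' (fun i =>
          (n.choose i : R) * genLah a b r i k * Pprod a b s (n - i + 1))]
        rw [Finset.sum_range_succ]
        simp only [Nat.choose_succ_self, Nat.cast_zero, zero_mul, add_zero,
          Nat.choose_zero_right, Nat.cast_one, Nat.sub_zero]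
        congr 1
        refine Finset.sum_congr rfl fun i hi => ?_
        rw [mem_range] at hi
        have : n - (i + 1) + 1 = n - i := by omega
        rw [this]
      linear_combination core
  
theorem genLah_rowSum_r_add_s {R : Type*} [CommRing R] (a b : R) (r s n : ℕ) :
    (∑ k ∈ range (n + 1), genLah a b (r + s) n k) =
      ∑ i ∈ range (n + 1), (n.choose i : R) * (∑ k ∈ range (i + 1), genLah a b r i k) *
        ∏ j ∈ range (n - i), (a * (j : R) + (a + b) * (s : R)) := by
  calc ∑ k ∈ range (n + 1), genLah a b (r + s) n k
      = ∑ k ∈ range (n + 1), ∑ i ∈ range (n + 1),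
          (n.choose i : R) * genLah a b r i k * Pprod a b s (n - i) :=
        Finset.sum_congr rfl fun k _ => genLah_add_s a b r s n k
    _ = ∑ i ∈ range (n + 1), ∑ k ∈ range (n + 1),
          (n.choose i : R) * genLah a b r i k * Pprod a b s (n - i) := Finset.sum_comm
    _ = ∑ i ∈ range (n + 1), (n.choose i : R) * (∑ k ∈ range (i + 1), genLah a b r i k) *
          Pprod a b s (n - i) := by
        refine Finset.sum_congr rfl fun i hi => ?_
        rw [mem_range] at hi
        have hsub : range (i + 1) ⊆ range (n + 1) := by
          intro x hx; rw [mem_range] at *; omega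
        rw [← Finset.sum_subset hsub (by
          intro x hx hx'
          rw [mem_range] at hx
          rw [mem_range, not_lt] at hx'
          rw [genLah_eq_zero a b r i x (by omega)]
          ring)]
        rw [Finset.mul_sum, Finset.sum_mul]
    _ = _ := by simp only [Pprod]
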